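/- Let Ω = (X, M, μ) be a measure space, 1 ≤ p < ∞, and let f ∈ L^p(Ω) be supported on a set of finite measure. Then for every ε > 0, there is a simple function s with supp(s) ⊆ supp(f) and ‖s·f - χ_{supp(f)}‖_p < ε. -/

import Mathlib

open MeasureTheory Filter Topology ENNReal

/-- Dominated convergence for `eLpNorm` tending to zero. -/
lemma aux_dct {X : Type*} [MeasurableSpace X] (μ : Measure X) (q : ℝ≥0∞) (hq0 : q ≠ 0)
    (hqt : q ≠ ∞) {F : ℕ → X → ℂ} (hFm : ∀ k, Measurable (F k)) {g : X → ℂ}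
    (hg : MemLp g q μ) (hbd : ∀ k x, ‖F k x‖ ≤ ‖g x‖)
    (hlim : ∀ x, Tendsto (fun k => F k x) atTop (𝓝 0)) :
    Tendsto (fun k => eLpNorm (F k) q μ) atTop (𝓝 0) := by
  have hq : 0 < q.toReal := toReal_pos hq0 hqt
  suffices h : Tendsto (fun k => ∫⁻ x, (‖F k x‖₊ : ℝ≥0∞) ^ q.toReal ∂μ) atTop (𝓝 0) by
    simp only [eLpNorm_eq_lintegral_rpow_enorm_toReal hq0 hqt]
    convert (ENNReal.continuous_rpow_const (y := q.toReal⁻¹)).continuousAt.tendsto.comp h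
    · simp only [Function.comp_apply, one_div]; rfl
    simp [ENNReal.zero_rpow_of_pos (inv_pos.mpr hq)]
  have hF_meas : ∀ k, Measurable fun x => (‖F k x‖₊ : ℝ≥0∞) ^ q.toReal := fun k =>
    ((hFm k).enorm).pow_const _
  have h_bound : ∀ k, (fun x => (‖F k x‖₊ : ℝ≥0∞) ^ q.toReal) ≤ᵐ[μ]
      fun x => (‖g x‖₊ : ℝ≥0∞) ^ q.toReal := fun k =>
    Filter.Eventually.of_forall fun x =>
      ENNReal.rpow_le_rpow (by exact_mod_cast hbd k x) toReal_nonneg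
  have h_fin : (∫⁻ x, (‖g x‖₊ : ℝ≥0∞) ^ q.toReal ∂μ) ≠ ⊤ :=
    (lintegral_rpow_enorm_lt_top_of_eLpNorm_lt_top hq0 hqt hg.2).ne
  have h_lim : ∀ᵐ x ∂μ, Tendsto (fun k => (‖F k x‖₊ : ℝ≥0∞) ^ q.toReal) atTop (𝓝 0) := by
    refine Filter.Eventually.of_forall fun x => ?_
    have : Tendsto (fun k => ((‖F k x‖₊ : ℝ≥0∞))) atTop (𝓝 0) := by
      rw [← ENNReal.coe_zero]
      exact ENNReal.tendsto_coe.mpr (by simpa using (hlim x).nnnorm)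
    convert (ENNReal.continuous_rpow_const (y := q.toReal)).continuousAt.tendsto.comp this
    all_goals simp [ENNReal.zero_rpow_of_pos hq]
  simpa using tendsto_lintegral_of_dominated_convergence _ hF_meas h_bound h_fin h_lim

theorem stmt6 {X : Type*} [MeasurableSpace X] (μ : Measure X) (p : ℝ) (hp : 1 ≤ p)
    (f : X → ℂ) (hfm : Measurable f) (hf : MemLp f (ENNReal.ofReal p) μ)
    (hsupp : μ (Function.support f) < ⊤) (ε : ℝ) (hε : 0 < ε) :
    ∃ s : SimpleFunc X ℂ, Function.support ⇑s ⊆ Function.support f ∧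
      eLpNorm (fun t => s t * f t - (Function.support f).indicator 1 t)
        (ENNReal.ofReal p) μ < ENNReal.ofReal ε := by
  set q : ℝ≥0∞ := ENNReal.ofReal p with hq_def
  have hq0 : q ≠ 0 := by
    simp [hq_def, ENNReal.ofReal_eq_zero]; linarith
  have hqt : q ≠ ∞ := ENNReal.ofReal_ne_top
  set S : Set X := Function.support f with hS_def
  have hSm : MeasurableSet S := measurableSet_support hfm
  have hχ : MemLp (S.indicator (fun _ => (1 : ℂ))) q μ :=
    memLp_indicator_const q hSm 1 (Or.inr hsupp.ne)
  -- the sets Aₙ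
  set A : ℕ → Set X := fun n => {x | (1 : ℝ) / (n + 1) ≤ ‖f x‖} with hA_def
  have hAm : ∀ n, MeasurableSet (A n) := fun n =>
    measurableSet_le measurable_const hfm.norm
  have hAS : ∀ n, A n ⊆ S := by
    intro n x hx
    have : (0 : ℝ) < ‖f x‖ := lt_of_lt_of_le (by positivity) hx
    simpa [hS_def, Function.mem_support] using norm_pos_iff.mp this
  -- Step A: χ_{Aₙ} → χ_S in L^q
  have hstepA : Tendsto
      (fun n => eLpNorm (fun x => (A n).indicator (fun _ => (1 : ℂ)) x -
        S.indicator (fun _ => (1 : ℂ)) x) q μ) atTop (𝓝 0) := by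
    apply aux_dct μ q hq0 hqt
    · intro n
      exact ((measurable_const.indicator (hAm n)).sub
        (measurable_const.indicator hSm))
    · exact hχ
    · intro n x
      by_cases hx : x ∈ S
      · by_cases hx' : x ∈ A n
        · simp [Set.indicator_of_mem hx, Set.indicator_of_mem hx']
        · simp [Set.indicator_of_mem hx, Set.indicator_of_notMem hx']
      · simp [Set.indicator_of_notMem hx,
          Set.indicator_of_notMem (fun h => hx (hAS n h))]
    · intro x
      by_cases hx : x ∈ S
      · have hfx : 0 < ‖f x‖ := by
          simpa [norm_pos_iff] using (Function.mem_support.mp hx)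
        obtain ⟨N, hN⟩ := exists_nat_gt (1 / ‖f x‖)
        have : ∀ n ≥ N, (A n).indicator (fun _ => (1 : ℂ)) x -
            S.indicator (fun _ => (1 : ℂ)) x = 0 := by
          intro n hn
          have hxA : x ∈ A n := by
            have hNn : (N : ℝ) ≤ n := Nat.cast_le.mpr hn
            have h2 : 1 / ‖f x‖ < (n : ℝ) + 1 := by linarith
            have h3 : 1 < ((n : ℝ) + 1) * ‖f x‖ := (div_lt_iff₀ hfx).mp h2
            have h4 : (0 : ℝ) < (n : ℝ) + 1 := by positivity
            show (1 : ℝ) / (n + 1) ≤ ‖f x‖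
            rw [div_le_iff₀ h4]
            linarith [mul_comm ((n : ℝ) + 1) (‖f x‖)]
          simp [Set.indicator_of_mem hx, Set.indicator_of_mem hxA]
        exact tendsto_atTop_of_eventually_const this
      · have : ∀ n, (A n).indicator (fun _ => (1 : ℂ)) x -
            S.indicator (fun _ => (1 : ℂ)) x = 0 := fun n => by
          simp [Set.indicator_of_notMem hx,
            Set.indicator_of_notMem (fun h => hx (hAS n h))]
        simpa [this] using tendsto_const_nhds
  obtain ⟨n, hn⟩ := (hstepA.eventually_lt_const
    (by simp [ENNReal.ofReal_pos]; linarith : (0:ℝ≥0∞) < ENNReal.ofReal (ε/2))).exists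
  -- Step B: approximate h = χ_{Aₙ}·f⁻¹ by simple functions
  set h : X → ℂ := (A n).indicator (fun x => (f x)⁻¹) with hh_def
  have hhm : Measurable h := (hfm.inv).indicator (hAm n)
  have hfA : ∀ x ∈ A n, f x ≠ 0 := fun x hx => by
    have : (0 : ℝ) < ‖f x‖ := lt_of_lt_of_le (by positivity) hx
    exact norm_pos_iff.mp this
  have hhf : ∀ x, h x * f x = (A n).indicator (fun _ => (1 : ℂ)) x := by
    intro x
    by_cases hx : x ∈ A n
    · simp [hh_def, Set.indicator_of_mem hx, inv_mul_cancel₀ (hfA x hx)]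
    · simp [hh_def, Set.indicator_of_notMem hx]
  set sk : ℕ → SimpleFunc X ℂ := fun k =>
    SimpleFunc.approxOn h hhm Set.univ 0 (Set.mem_univ 0) k with hsk_def
  have hsk_dist : ∀ k x, ‖sk k x - h x‖ ≤ ‖h x‖ := by
    intro k x
    have := SimpleFunc.edist_approxOn_le hhm (Set.mem_univ (0:ℂ)) x k
    rw [edist_eq_enorm_sub, edist_eq_enorm_sub] at this
    simpa using NNReal.coe_le_coe.mpr (ENNReal.coe_le_coe.mp this)
  have hsk_supp : ∀ k, Function.support (⇑(sk k)) ⊆ S := by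
    intro k x hx
    by_contra hxS
    have hxA : x ∉ A n := fun h' => hxS (hAS n h')
    have hhx : h x = 0 := Set.indicator_of_notMem hxA _
    have := hsk_dist k x
    rw [hhx] at this
    simp only [sub_zero, norm_zero] at this
    exact hx (norm_le_zero_iff.mp this)
  -- Step B convergence
  have hstepB : Tendsto (fun k => eLpNorm (fun x => sk k x * f x - h x * f x) q μ)
      atTop (𝓝 0) := by
    apply aux_dct μ q hq0 hqt
    · intro k
      exact ((sk k).measurable.mul hfm).sub (hhm.mul hfm)
    · exact hχ
    · intro k x
      have h1 : ‖sk k x * f x - h x * f x‖ = ‖sk k x - h x‖ * ‖f x‖ := by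
        rw [← sub_mul, norm_mul]
      have h2 : ‖h x‖ * ‖f x‖ ≤ ‖S.indicator (fun _ => (1:ℂ)) x‖ := by
        by_cases hx : x ∈ A n
        · have : ‖h x‖ * ‖f x‖ = 1 := by
            rw [← norm_mul, hhf x, Set.indicator_of_mem hx]; simp
          rw [this, Set.indicator_of_mem (hAS n hx)]; simp
        · simp [hh_def, Set.indicator_of_notMem hx]
      calc ‖sk k x * f x - h x * f x‖ = ‖sk k x - h x‖ * ‖f x‖ := h1
        _ ≤ ‖h x‖ * ‖f x‖ := by
            exact mul_le_mul_of_nonneg_right (hsk_dist k x) (norm_nonneg _)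
        _ ≤ ‖S.indicator (fun _ => (1:ℂ)) x‖ := h2
    · intro x
      have : Tendsto (fun k => sk k x) atTop (𝓝 (h x)) :=
        SimpleFunc.tendsto_approxOn hhm (Set.mem_univ 0) (by simp)
      have := ((this.sub tendsto_const_nhds).mul tendsto_const_nhds :
        Tendsto (fun k => (sk k x - h x) * f x) atTop (𝓝 ((h x - h x) * f x)))
      simpa [sub_mul] using this
  obtain ⟨k, hk⟩ := (hstepB.eventually_lt_const
    (by simp [ENNReal.ofReal_pos]; linarith : (0:ℝ≥0∞) < ENNReal.ofReal (ε/2))).exists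
  refine ⟨sk k, hsk_supp k, ?_⟩
  -- triangle inequality
  have heq : (fun t => sk k t * f t - S.indicator 1 t) =
      (fun t => sk k t * f t - h t * f t) +
      (fun t => (A n).indicator (fun _ => (1:ℂ)) t - S.indicator (fun _ => (1:ℂ)) t) := by
    funext t
    simp only [Pi.add_apply, hhf t]
    have : S.indicator (1 : X → ℂ) t = S.indicator (fun _ => (1:ℂ)) t := rfl
    rw [this]; ring
  rw [heq]
  have h1m : AEStronglyMeasurable (fun t => sk k t * f t - h t * f t) μ :=
    (((sk k).measurable.mul hfm).sub (hhm.mul hfm)).aestronglyMeasurable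
  have h2m : AEStronglyMeasurable
      (fun t => (A n).indicator (fun _ => (1:ℂ)) t - S.indicator (fun _ => (1:ℂ)) t) μ :=
    ((measurable_const.indicator (hAm n)).sub (measurable_const.indicator hSm)).aestronglyMeasurable
  have hq1 : (1 : ℝ≥0∞) ≤ q := by rw [hq_def]; exact ENNReal.one_le_ofReal.mpr hp
  have htri := eLpNorm_add_le (p := q) h1m h2m hq1
  calc eLpNorm _ q μ ≤ _ + _ := htri
    _ < ENNReal.ofReal (ε/2) + ENNReal.ofReal (ε/2) := ENNReal.add_lt_add hk hn
    _ = ENNReal.ofReal ε := by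
        rw [← ENNReal.ofReal_add (by linarith) (by linarith)]; norm_num
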